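/- Let K be a field, let H ∈ K[x_1,…,x_n]^m be a polynomial map of degree d, and set r := rk JH. If |K| > (d−1)r and JH · x = 0 (where x = (x_1,…,x_n)^T), then there exist S ∈ GL_m(K) and T ∈ GL_n(K) such that for H̃ := S·H(Tx), the Jacobian matrix J H̃ evaluated at the (r+1)-th standard basis vector e_{r+1} equals the block matrix [[I_r, 0],[0, 0]]. Moreover, the hypothesis |K| > (d−1)r may be weakened to |K| ≥ (d−1)r if every nonzero component of H is homogeneous. -/

import Mathlib

open MvPolynomial

/-- The Jacobian matrix of a polynomial map. -/
noncomputable def jac {K : Type*} [CommRing K] {m n : ℕ}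
    (H : Fin m → MvPolynomial (Fin n) K) :
    Matrix (Fin m) (Fin n) (MvPolynomial (Fin n) K) :=
  Matrix.of fun i j => pderiv j (H i)

/-- The rank of the Jacobian matrix, taken over the rational function field. -/
noncomputable def jacRank {K : Type*} [Field K] {m n : ℕ}
    (H : Fin m → MvPolynomial (Fin n) K) : ℕ :=
  ((jac H).map (algebraMap (MvPolynomial (Fin n) K)
    (FractionRing (MvPolynomial (Fin n) K)))).rank

/-- The polynomial map `S · H(Tx)`. -/
noncomputable def applyST {K : Type*} [CommRing K] {m n : ℕ}
    (S : Matrix (Fin m) (Fin m) K) (T : Matrix (Fin n) (Fin n) K)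
    (H : Fin m → MvPolynomial (Fin n) K) : Fin m → MvPolynomial (Fin n) K :=
  fun i => ∑ j, C (S i j) * aeval (fun k => ∑ l, C (T k l) * X l) (H j)

section AuxJ
open Matrix Module
variable {F : Type*} [Field F]

lemma auxJ_rank_lt_of_mulVec {a b : ℕ} (B : Matrix (Fin a) (Fin b) F)
    {v : Fin b → F} (hv : v ≠ 0) (hBv : B.mulVec v = 0) : B.rank < b := by
  have h := LinearMap.finrank_range_add_finrank_ker B.mulVecLin
  have hker : 0 < finrank F (LinearMap.ker B.mulVecLin) := by
    rw [Module.finrank_pos_iff_exists_ne_zero]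
    exact ⟨⟨v, hBv⟩, fun h0 => hv (congrArg Subtype.val h0)⟩
  have hfin : finrank F (Fin b → F) = b := by simp
  rw [hfin] at h
  have : B.rank = finrank F (LinearMap.range B.mulVecLin) := rfl
  omega

lemma auxJ_rank_col_le {a b k : ℕ} (B : Matrix (Fin a) (Fin b) F) (t : Fin k → Fin b) :
    (B.submatrix id t).rank ≤ B.rank := by
  rw [Matrix.rank_eq_finrank_span_cols, Matrix.rank_eq_finrank_span_cols]
  apply Submodule.finrank_mono
  apply Submodule.span_mono
  rintro x ⟨j, rfl⟩
  exact ⟨t j, rfl⟩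

lemma auxJ_rank_row_le {a b k : ℕ} (B : Matrix (Fin a) (Fin b) F) (s : Fin k → Fin a) :
    (B.submatrix s id).rank ≤ B.rank := by
  rw [← Matrix.rank_transpose (B.submatrix s id), ← Matrix.rank_transpose B]
  have : (B.submatrix s id)ᵀ = Bᵀ.submatrix id s := rfl
  rw [this]
  exact auxJ_rank_col_le Bᵀ s

lemma auxJ_le_rank_of_det_ne_zero {a b k : ℕ} (B : Matrix (Fin a) (Fin b) F)
    (s : Fin k → Fin a) (t : Fin k → Fin b) (h : (B.submatrix s t).det ≠ 0) :
    k ≤ B.rank := by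
  have h1 : (B.submatrix s t).rank = k := by
    rw [Matrix.rank_of_isUnit _ ((Matrix.isUnit_iff_isUnit_det _).mpr (isUnit_iff_ne_zero.mpr h))]
    simp
  have h2 : B.submatrix s t = (B.submatrix id t).submatrix s id := by
    rw [Matrix.submatrix_submatrix]; rfl
  calc k = (B.submatrix s t).rank := h1.symm
    _ ≤ (B.submatrix id t).rank := by rw [h2]; exact auxJ_rank_row_le _ s
    _ ≤ B.rank := auxJ_rank_col_le _ t

/-- column extraction -/
lemma auxJ_exists_cols {a b k : ℕ} (B : Matrix (Fin a) (Fin b) F) (hk : k ≤ B.rank) :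
    ∃ t : Fin k → Fin b, LinearIndependent F (fun j => Bᵀ (t j)) := by
  classical
  obtain ⟨bs, hsub, hspan, hind⟩ := exists_linearIndependent F (Set.range Bᵀ)
  have hfin : bs.Finite := hind.finite
  have hfty : Fintype bs := hfin.fintype
  have hcard : k ≤ Fintype.card bs := by
    have := finrank_span_set_eq_card hind
    rw [hspan] at this
    rw [← Set.toFinset_card, ← this]
    rw [Matrix.rank_eq_finrank_span_cols] at hk
    exact hk
  obtain ⟨e⟩ : Nonempty (Fin (Fintype.card bs) ≃ bs) := ⟨(Fintype.equivFin bs).symm⟩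
  have pick : ∀ x : bs, ∃ j, Bᵀ j = (x : Fin a → F) := fun x => hsub x.2
  choose tf htf using pick
  refine ⟨fun j => tf (e (Fin.castLE hcard j)), ?_⟩
  have : (fun j => Bᵀ (tf (e (Fin.castLE hcard j))))
      = (fun x : bs => (x : Fin a → F) : bs → Fin a → F) ∘ (fun j => e (Fin.castLE hcard j)) := by
    funext j; simp [Function.comp, htf]
  rw [this]
  exact hind.comp _ (e.injective.comp (Fin.castLE_injective hcard))

lemma auxJ_det_ne_zero_of_rows {k : ℕ} (D : Matrix (Fin k) (Fin k) F)
    (h : LinearIndependent F (fun i => D i)) : D.det ≠ 0 := by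
  intro h0
  rw [← Matrix.det_transpose] at h0
  obtain ⟨v, hv0, hv⟩ := (Matrix.exists_mulVec_eq_zero_iff).mpr h0
  refine hv0 ?_
  have := (Fintype.linearIndependent_iff.mp h) v ?_
  · funext i; exact this i
  · funext i
    have := congrFun hv i
    simpa [Matrix.mulVec, dotProduct, Finset.sum_apply, mul_comm] using this

lemma auxJ_exists_det_ne_zero {a b k : ℕ} (B : Matrix (Fin a) (Fin b) F) (hk : k ≤ B.rank) :
    ∃ (s : Fin k → Fin a) (t : Fin k → Fin b), (B.submatrix s t).det ≠ 0 := by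
  obtain ⟨t, ht⟩ := auxJ_exists_cols B hk
  set C := B.submatrix id t with hC
  have hCT : Cᵀ = fun j => Bᵀ (t j) := rfl
  have hrankC : (Cᵀ).rank = k := by
    rw [Matrix.rank_transpose, Matrix.rank_eq_finrank_span_cols]
    show finrank F (Submodule.span F (Set.range Cᵀ)) = k
    rw [hCT, finrank_span_eq_card ht, Fintype.card_fin]
  obtain ⟨s, hs⟩ := auxJ_exists_cols Cᵀ (le_of_eq hrankC.symm)
  have hCTT : (Cᵀ)ᵀ = C := Matrix.transpose_transpose _
  refine ⟨s, t, ?_⟩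
  have hD : B.submatrix s t = C.submatrix s id := by
    rw [hC, Matrix.submatrix_submatrix]; rfl
  rw [hD]
  apply auxJ_det_ne_zero_of_rows
  rw [hCTT] at hs
  exact hs

end AuxJ

section AuxP
open MvPolynomial
variable {K : Type*} [Field K] {n : ℕ}

lemma auxP_degree_sub_single {j : Fin n} {μ : Fin n →₀ ℕ} (h : μ j ≠ 0) :
    (μ - Finsupp.single j 1).degree = μ.degree - 1 := by
  have hle : Finsupp.single j 1 ≤ μ := by
    rw [Finsupp.single_le_iff]; omega
  have hadd : (μ - Finsupp.single j 1) + Finsupp.single j 1 = μ := by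
    ext i
    simp only [Finsupp.coe_add, Finsupp.coe_tsub, Pi.add_apply, Pi.sub_apply,
      Finsupp.single_apply]
    by_cases hij : j = i
    · subst hij; simp; omega
    · simp [hij]
  have hdadd : ∀ (x y : Fin n →₀ ℕ), (x + y).degree = x.degree + y.degree := by
    intro x y; simp [Finsupp.degree_eq_weight_one, map_add]
  have hdsingle : (Finsupp.single j 1).degree = 1 := by
    simp [Finsupp.degree_apply, Finsupp.support_single_ne_zero]
  have := congrArg Finsupp.degree hadd
  rw [hdadd, hdsingle] at this
  omega

lemma auxP_isHomogeneous_pderiv {P : MvPolynomial (Fin n) K} {e : ℕ}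
    (h : P.IsHomogeneous e) (j : Fin n) : (pderiv j P).IsHomogeneous (e - 1) := by
  classical
  conv_lhs => rw [P.as_sum]
  rw [map_sum]
  apply IsHomogeneous.sum
  intro μ hμ
  rw [pderiv_monomial]
  by_cases h0 : μ j = 0
  · simp [h0]
    exact isHomogeneous_zero _ _ _
  · apply isHomogeneous_monomial
    rw [auxP_degree_sub_single h0]
    have : μ.degree = e := by
      have hc : coeff μ P ≠ 0 := (mem_support_iff).mp hμ
      have := h hc
      rw [Finsupp.degree_eq_weight_one]
      exact this
    omega

lemma auxP_totalDegree_pderiv_le (P : MvPolynomial (Fin n) K) (j : Fin n) :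
    (pderiv j P).totalDegree ≤ P.totalDegree - 1 := by
  classical
  conv_lhs => rw [P.as_sum]
  rw [map_sum]
  refine le_trans (totalDegree_finset_sum _ _) ?_
  apply Finset.sup_le
  intro μ hμ
  rw [pderiv_monomial]
  by_cases h0 : μ j = 0
  · simp [h0]
  · refine le_trans (totalDegree_monomial_le _ _) ?_
    have h1 : ((μ - Finsupp.single j 1).sum fun _ => id) = (μ - Finsupp.single j 1).degree := rfl
    rw [h1, auxP_degree_sub_single h0]
    have h2 : μ.degree ≤ P.totalDegree := by
      have := le_totalDegree hμ
      simpa [Finsupp.degree_apply, Finsupp.sum] using this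
    omega

lemma auxP_eval_smul {P : MvPolynomial (Fin n) K} {e : ℕ} (h : P.IsHomogeneous e)
    (c : K) (x : Fin n → K) : eval (c • x) P = c ^ e * eval x P := by
  rw [eval_eq, eval_eq, Finset.mul_sum]
  apply Finset.sum_congr rfl
  intro μ hμ
  have hdeg : ∑ i ∈ μ.support, μ i = e := by
    have hc : coeff μ P ≠ 0 := (mem_support_iff).mp hμ
    have := h hc
    simpa [Finsupp.weight_apply, Finsupp.sum] using this
  have : ∏ i ∈ μ.support, (c • x) i ^ μ i
      = c ^ e * ∏ i ∈ μ.support, x i ^ μ i := by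
    simp only [Pi.smul_apply, smul_eq_mul, mul_pow]
    rw [Finset.prod_mul_distrib, Finset.prod_pow_eq_pow_sum, hdeg]
  rw [this]; ring

/-- existence of a nonvanishing point for a nonzero polynomial of small degree -/
lemma auxP_exists_eval_ne_zero_strict {f : MvPolynomial (Fin n) K} (hf : f ≠ 0)
    (hcard : (f.totalDegree : Cardinal) < Cardinal.mk K) :
    ∃ p : Fin n → K, eval p f ≠ 0 := by
  classical
  set D := f.totalDegree with hD
  -- top homogeneous component is nonzero
  have hne : f.support.Nonempty := support_nonempty.mpr hf
  obtain ⟨μ, hμs, hμd⟩ := Finset.exists_mem_eq_sup f.support hne (fun μ => μ.sum fun _ e => e)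
  have htop : homogeneousComponent D f ≠ 0 := by
    intro h0
    have : coeff μ (homogeneousComponent D f) = coeff μ f := by
      rw [coeff_homogeneousComponent]
      rw [if_pos]
      rw [Finsupp.degree, hD, totalDegree, hμd]
      rfl
    rw [h0] at this
    simp only [coeff_zero] at this
    exact (mem_support_iff.mp hμs) this.symm
  obtain ⟨a, ha⟩ : ∃ a : Fin n → K, eval a (homogeneousComponent D f) ≠ 0 := by
    by_contra hall
    push_neg at hall
    exact htop ((homogeneousComponent_isHomogeneous D f).eq_zero_of_forall_eval_eq_zero_of_le_card
      hall (le_of_lt hcard))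
  -- the univariate restriction to the line through a
  set φ : Polynomial K := ∑ i ∈ Finset.range (D + 1),
    Polynomial.C (eval a (homogeneousComponent i f)) * Polynomial.X ^ i with hφ
  have hφcoeff : ∀ i, i ≤ D → φ.coeff i = eval a (homogeneousComponent i f) := by
    intro i hi
    rw [hφ, Polynomial.finset_sum_coeff]
    rw [Finset.sum_eq_single i]
    · rw [Polynomial.coeff_C_mul, Polynomial.coeff_X_pow, if_pos rfl, mul_one]
    · intro b _ hbi
      rw [Polynomial.coeff_C_mul, Polynomial.coeff_X_pow, if_neg (Ne.symm hbi), mul_zero]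
    · intro hnotin; exact absurd (Finset.mem_range.mpr (by omega)) hnotin
  have hφne : φ ≠ 0 := by
    intro h0
    have := hφcoeff D le_rfl
    rw [h0, Polynomial.coeff_zero] at this
    exact ha this.symm
  have hφdeg : φ.natDegree ≤ D := by
    apply Polynomial.natDegree_sum_le_of_forall_le
    intro i hi
    refine le_trans (Polynomial.natDegree_C_mul_le _ _) ?_
    simp only [Polynomial.natDegree_X_pow]
    exact Nat.lt_succ_iff.mp (Finset.mem_range.mp hi)
  obtain ⟨c, hc⟩ := φ.exists_eval_ne_zero_of_natDegree_lt_card hφne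
    (lt_of_le_of_lt (by exact_mod_cast Nat.cast_le.mpr hφdeg) hcard)
  refine ⟨c • a, ?_⟩
  have hsum : eval (c • a) f = φ.eval c := by
    conv_lhs => rw [← f.sum_homogeneousComponent]
    rw [map_sum, hφ, Polynomial.eval_finset_sum]
    apply Finset.sum_congr rfl
    intro i _
    rw [auxP_eval_smul (homogeneousComponent_isHomogeneous i f), Polynomial.eval_mul,
      Polynomial.eval_C, Polynomial.eval_pow, Polynomial.eval_X, mul_comm]
  rw [hsum]
  exact hc

end AuxP

section AuxC
open MvPolynomial
variable {K : Type*} [Field K] {m n : ℕ}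

lemma auxC_pderiv_aeval (v : Fin n → MvPolynomial (Fin n) K)
    (P : MvPolynomial (Fin n) K) (j : Fin n) :
    pderiv j (aeval v P) = ∑ l, aeval v (pderiv l P) * pderiv j (v l) := by
  classical
  induction P using MvPolynomial.induction_on with
  | C a => simp
  | add p q hp hq => simp only [map_add, hp, hq, add_mul, Finset.sum_add_distrib]
  | mul_X p i hp =>
    simp only [map_mul, aeval_X, pderiv_mul, hp]
    rw [Finset.sum_mul]
    have : ∀ l : Fin n, pderiv l (p * X i)
        = pderiv l p * X i + p * (if l = i then 1 else 0) := by
      intro l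
      rw [pderiv_mul]
      congr 1
      by_cases h : l = i
      · subst h; rw [pderiv_X_self, if_pos rfl]
      · rw [pderiv_X_of_ne (Ne.symm h), if_neg h]
    simp only [this, map_add, map_mul, aeval_X, add_mul, Finset.sum_add_distrib]
    congr 1
    · apply Finset.sum_congr rfl; intro l _; ring
    · rw [Finset.sum_eq_single i]
      · simp [mul_comm]
      · intro b _ hbi; simp [hbi]
      · intro h; exact absurd (Finset.mem_univ i) h

lemma auxC_eval_aeval (a : Fin n → K) (v : Fin n → MvPolynomial (Fin n) K)
    (P : MvPolynomial (Fin n) K) :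
    eval a (aeval v P) = eval (fun k => eval a (v k)) P := by
  rw [aeval_def, eval_eval₂]
  have h1 : ((eval a).comp (algebraMap K (MvPolynomial (Fin n) K))) = RingHom.id K := by
    ext x; simp [MvPolynomial.algebraMap_eq]
  rw [h1, eval₂_id]

lemma auxC_jac_applyST (S : Matrix (Fin m) (Fin m) K) (T : Matrix (Fin n) (Fin n) K)
    (H : Fin m → MvPolynomial (Fin n) K) (a : Fin n → K) :
    (Matrix.of fun i j => eval a (jac (applyST S T H) i j))
      = S * ((jac H).map (eval (T.mulVec a))) * T := by
  classical
  set v : Fin n → MvPolynomial (Fin n) K := fun k => ∑ l, C (T k l) * X l with hv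
  have hb : (fun k => eval a (v k)) = T.mulVec a := by
    funext k
    simp [hv, Matrix.mulVec, dotProduct]
  have hpv : ∀ l j, pderiv j (v l) = C (T l j) := by
    intro l j
    rw [hv]
    rw [map_sum]
    rw [Finset.sum_eq_single j]
    · rw [pderiv_C_mul, pderiv_X_self, mul_one]
    · intro b _ hbj
      rw [pderiv_C_mul, pderiv_X_of_ne hbj, mul_zero]
    · intro h; exact absurd (Finset.mem_univ j) h
  ext i j
  have hentry : jac (applyST S T H) i j
      = ∑ k, C (S i k) * ∑ l, aeval v (pderiv l (H k)) * C (T l j) := by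
    show pderiv j (∑ k, C (S i k) * aeval v (H k)) = _
    rw [map_sum]
    apply Finset.sum_congr rfl
    intro k _
    rw [pderiv_C_mul, auxC_pderiv_aeval]
    congr 1
    apply Finset.sum_congr rfl
    intro l _
    rw [hpv]
  rw [Matrix.of_apply, hentry, map_sum]
  have hL : ∀ k, eval a (C (S i k) * ∑ l, aeval v (pderiv l (H k)) * C (T l j))
      = ∑ l, S i k * (((jac H).map (eval (T.mulVec a))) k l * T l j) := by
    intro k
    rw [map_mul, eval_C, map_sum, Finset.mul_sum]
    apply Finset.sum_congr rfl
    intro l _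
    rw [map_mul, eval_C, auxC_eval_aeval, hb]
    rfl
  simp only [hL]
  rw [Finset.sum_comm]
  rw [Matrix.mul_apply]
  apply Finset.sum_congr rfl
  intro l _
  rw [Matrix.mul_apply, Finset.sum_mul]
  apply Finset.sum_congr rfl
  intro k _
  ring

end AuxC

section AuxB
open Module Set
variable {K : Type*} [Field K] {m n r : ℕ}

lemma auxB_normal_form (A : Matrix (Fin m) (Fin n) K)
    (hrA : A.rank = r) (hrn : r < n) (hrm : r ≤ m)
    {p : Fin n → K} (hp0 : p ≠ 0) (hAp : A.mulVec p = 0) :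
    ∃ (S : Matrix.GeneralLinearGroup (Fin m) K) (T : Matrix.GeneralLinearGroup (Fin n) K),
      ((T : Matrix (Fin n) (Fin n) K).mulVec (fun l => if (l : ℕ) = r then 1 else 0) = p) ∧
      (S : Matrix (Fin m) (Fin m) K) * A * (T : Matrix (Fin n) (Fin n) K) =
        Matrix.of (fun (i : Fin m) (j : Fin n) =>
          if (i : ℕ) = (j : ℕ) ∧ (i : ℕ) < r then 1 else 0) := by
  classical
  set k := n - r with hk
  have hkpos : 0 < k := by omega
  set W := LinearMap.ker A.mulVecLin with hWdef
  have hWrank : finrank K W = k := by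
    rw [hWdef]
    have h := LinearMap.finrank_range_add_finrank_ker A.mulVecLin
    have h2 : finrank K (Fin n → K) = n := by simp
    rw [h2] at h
    have hA : finrank K (LinearMap.range A.mulVecLin) = r := hrA
    omega
  have hpW : p ∈ W := hAp
  -- Basis of W whose 0-th vector is p
  have hli : LinearIndepOn K id ({⟨p, hpW⟩} : Set W) :=
    (linearIndepOn_singleton_iff K).mpr (by
      intro h0; exact hp0 (congrArg Subtype.val h0))
  let bW0 := Basis.extend hli
  haveI : Fintype (hli.extend (Set.subset_univ _)) := FiniteDimensional.fintypeBasisIndex bW0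
  have hcardW : Fintype.card (hli.extend (Set.subset_univ _)) = k := by
    rw [← Module.finrank_eq_card_basis bW0, hWrank]
  have hpmem : (⟨p, hpW⟩ : W) ∈ hli.extend (Set.subset_univ _) :=
    hli.subset_extend _ rfl
  let e1 : (hli.extend (Set.subset_univ _)) ≃ Fin k := Fintype.equivFinOfCardEq hcardW
  let e2 := e1.trans (Equiv.swap (e1 ⟨⟨p, hpW⟩, hpmem⟩) ⟨0, hkpos⟩)
  let bW := bW0.reindex e2
  have hbW0 : bW ⟨0, hkpos⟩ = ⟨p, hpW⟩ := by
    rw [Basis.reindex_apply]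
    have : e2.symm ⟨0, hkpos⟩ = ⟨⟨p, hpW⟩, hpmem⟩ := by
      show e1.symm (Equiv.swap (e1 ⟨⟨p, hpW⟩, hpmem⟩) ⟨0, hkpos⟩ ⟨0, hkpos⟩) = _
      rw [Equiv.swap_apply_right, Equiv.symm_apply_apply]
    rw [this]
    exact Basis.extend_apply_self hli _
  -- the family of W-basis vectors inside K^n
  set g : Fin k → (Fin n → K) := fun i => ((bW i : W) : Fin n → K) with hg
  have hgW : ∀ i, g i ∈ W := fun i => (bW i).2
  have hgind : LinearIndependent K g := by
    have := bW.linearIndependent.map' W.subtype (LinearMap.ker_eq_bot.mpr Subtype.val_injective)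
    exact this
  have hgp : g ⟨0, hkpos⟩ = p := by rw [hg]; simp [hbW0]
  -- extend to a basis of K^n
  have hgs := hgind.linearIndepOn_id
  let bV0 := Basis.extend hgs
  haveI : Fintype (hgs.extend (Set.subset_univ _)) := FiniteDimensional.fintypeBasisIndex bV0
  let e0 : Fin k ≃ Set.range g := Equiv.ofInjective g hgind.injective
  let D := (hgs.extend (Set.subset_univ _) \ Set.range g : Set (Fin n → K))
  haveI : Fintype D := Fintype.ofFinite _
  let eE : Fin k ⊕ D ≃ (hgs.extend (Set.subset_univ _)) :=
    (Equiv.sumCongr e0 (Equiv.refl _)).trans (Equiv.Set.sumDiffSubset (hgs.subset_extend _))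
  let bV1 := bV0.reindex eE.symm
  have hbV1 : ∀ i : Fin k, bV1 (Sum.inl i) = g i := by
    intro i
    rw [Basis.reindex_apply, Equiv.symm_symm]
    show bV0 (eE (Sum.inl i)) = g i
    have : eE (Sum.inl i) = Set.inclusion (hgs.subset_extend _) (e0 i) := by
      show (Equiv.Set.sumDiffSubset (hgs.subset_extend _)) (Sum.inl (e0 i)) = _
      exact Equiv.Set.sumDiffSubset_apply_inl _ _
    rw [this]
    rw [Basis.extend_apply_self]
    rfl
  have hcardD : Fintype.card D = r := by
    have h1 := Module.finrank_eq_card_basis bV1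
    rw [Fintype.card_sum, Fintype.card_fin] at h1
    have h2 : finrank K (Fin n → K) = n := by simp
    rw [h2] at h1
    omega
  let eD : D ≃ Fin r := Fintype.equivFinOfCardEq hcardD
  have hrk : r + k = n := by omega
  let E : (Fin k ⊕ D) ≃ Fin n :=
    ((Equiv.sumCongr (Equiv.refl (Fin k)) eD).trans (Equiv.sumComm _ _)).trans
      ((finSumFinEquiv).trans (finCongr hrk))
  have hEinl : ∀ i : Fin k, ((E (Sum.inl i) : Fin n) : ℕ) = r + i := by
    intro i; rfl
  have hEinr : ∀ d : D, ((E (Sum.inr d) : Fin n) : ℕ) = (eD d : ℕ) := by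
    intro d; rfl
  let vB := bV1.reindex E
  have hvB : ∀ x, vB (E x) = bV1 x := by
    intro x; rw [Basis.reindex_apply, Equiv.symm_apply_apply]
  -- the key facts about vB
  have hvW : ∀ j : Fin n, r ≤ (j : ℕ) → vB j ∈ W := by
    intro j hj
    have hjk : (j : ℕ) - r < k := by omega
    have : j = E (Sum.inl ⟨(j : ℕ) - r, hjk⟩) := by
      apply Fin.ext
      rw [hEinl]
      show (j : ℕ) = r + ((j : ℕ) - r)
      omega
    rw [this, hvB, hbV1]
    exact hgW _
  have hvp : vB ⟨r, hrn⟩ = p := by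
    have : (⟨r, hrn⟩ : Fin n) = E (Sum.inl ⟨0, hkpos⟩) := by
      apply Fin.ext; rw [hEinl]
      show r = r + 0
      omega
    rw [this, hvB, hbV1, hgp]
  -- the family c of images
  set c : Fin r → (Fin m → K) := fun i => A.mulVec (vB (Fin.castLE hrn.le i)) with hc
  have hcind : LinearIndependent K c := by
    rw [Fintype.linearIndependent_iff]
    intro cf hcf
    set q : Fin n → K := ∑ i : Fin r, cf i • vB (Fin.castLE hrn.le i) with hq
    have hqW : q ∈ W := by
      rw [hWdef, LinearMap.mem_ker]
      rw [hq, map_sum]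
      rw [← hcf]
      apply Finset.sum_congr rfl
      intro i _
      rw [map_smul]
      rfl
    -- representation of q in the basis bW
    set dcoef : Fin k → K := fun i => bW.repr ⟨q, hqW⟩ i with hd
    have hqrepr : q = ∑ i : Fin k, dcoef i • g i := by
      have h2 := congrArg (Subtype.val : W → (Fin n → K)) (bW.sum_repr ⟨q, hqW⟩)
      simp only [Submodule.coe_sum, SetLike.val_smul] at h2
      exact h2.symm
    -- combined coefficients
    set F : Fin n → K := fun j =>
      Sum.elim (fun i => - dcoef i) (fun d => cf (eD d)) (E.symm j) with hF
    have hFinl : ∀ i : Fin k, F (E (Sum.inl i)) = - dcoef i := by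
      intro i; simp only [hF, Equiv.symm_apply_apply, Sum.elim_inl]
    have hFinr : ∀ d : D, F (E (Sum.inr d)) = cf (eD d) := by
      intro d; simp only [hF, Equiv.symm_apply_apply, Sum.elim_inr]
    have hEcast : ∀ i : Fin r, E (Sum.inr (eD.symm i)) = Fin.castLE hrn.le i := by
      intro i
      apply Fin.ext
      rw [hEinr, Equiv.apply_symm_apply]
      rfl
    have hsum : ∑ j : Fin n, F j • vB j = 0 := by
      rw [← Equiv.sum_comp E (fun j => F j • vB j), Fintype.sum_sum_type]
      have hA1 : ∑ i : Fin k, F (E (Sum.inl i)) • vB (E (Sum.inl i)) = - q := by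
        rw [hqrepr, ← Finset.sum_neg_distrib]
        apply Finset.sum_congr rfl
        intro i _
        rw [hFinl, hvB, hbV1, neg_smul]
      have hA2 : ∑ d : D, F (E (Sum.inr d)) • vB (E (Sum.inr d)) = q := by
        rw [← Equiv.sum_comp eD.symm
          (fun d => F (E (Sum.inr d)) • vB (E (Sum.inr d))), hq]
        apply Finset.sum_congr rfl
        intro i _
        rw [hFinr, Equiv.apply_symm_apply, hEcast]
      rw [hA1, hA2]
      exact neg_add_cancel q
    have hFzero := Fintype.linearIndependent_iff.mp vB.linearIndependent F hsum
    intro i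
    have := hFzero (E (Sum.inr (eD.symm i)))
    rw [hFinr, Equiv.apply_symm_apply] at this
    exact this
  -- extend c to a basis of K^m
  have hcs := hcind.linearIndepOn_id
  let bQ0 := Basis.extend hcs
  haveI : Fintype (hcs.extend (Set.subset_univ _)) := FiniteDimensional.fintypeBasisIndex bQ0
  let ec0 : Fin r ≃ Set.range c := Equiv.ofInjective c hcind.injective
  let D' := (hcs.extend (Set.subset_univ _) \ Set.range c : Set (Fin m → K))
  haveI : Fintype D' := Fintype.ofFinite _
  let eE' : Fin r ⊕ D' ≃ (hcs.extend (Set.subset_univ _)) :=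
    (Equiv.sumCongr ec0 (Equiv.refl _)).trans (Equiv.Set.sumDiffSubset (hcs.subset_extend _))
  let bQ1 := bQ0.reindex eE'.symm
  have hbQ1 : ∀ i : Fin r, bQ1 (Sum.inl i) = c i := by
    intro i
    rw [Basis.reindex_apply, Equiv.symm_symm]
    show bQ0 (eE' (Sum.inl i)) = c i
    have : eE' (Sum.inl i) = Set.inclusion (hcs.subset_extend _) (ec0 i) := by
      show (Equiv.Set.sumDiffSubset (hcs.subset_extend _)) (Sum.inl (ec0 i)) = _
      exact Equiv.Set.sumDiffSubset_apply_inl _ _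
    rw [this, Basis.extend_apply_self]
    rfl
  have hcardD' : Fintype.card D' = m - r := by
    have h1 := Module.finrank_eq_card_basis bQ1
    rw [Fintype.card_sum, Fintype.card_fin] at h1
    have h2 : finrank K (Fin m → K) = m := by simp
    rw [h2] at h1
    omega
  let eD' : D' ≃ Fin (m - r) := Fintype.equivFinOfCardEq hcardD'
  have hrm' : r + (m - r) = m := by omega
  let E' : (Fin r ⊕ D') ≃ Fin m :=
    (Equiv.sumCongr (Equiv.refl (Fin r)) eD').trans ((finSumFinEquiv).trans (finCongr hrm'))
  have hE'inl : ∀ i : Fin r, ((E' (Sum.inl i) : Fin m) : ℕ) = (i : ℕ) := by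
    intro i; rfl
  let wB := bQ1.reindex E'
  have hwB : ∀ i : Fin r, wB (Fin.castLE hrm i) = c i := by
    intro i
    have : Fin.castLE hrm i = E' (Sum.inl i) := by
      apply Fin.ext; rw [hE'inl]; rfl
    rw [this, Basis.reindex_apply, Equiv.symm_apply_apply, hbQ1]
  -- matrices
  let T : Matrix (Fin n) (Fin n) K := (Pi.basisFun K (Fin n)).toMatrix vB
  let Q : Matrix (Fin m) (Fin m) K := (Pi.basisFun K (Fin m)).toMatrix wB
  haveI hTinv : Invertible T := (Pi.basisFun K (Fin n)).invertibleToMatrix vB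
  haveI hQinv : Invertible Q := (Pi.basisFun K (Fin m)).invertibleToMatrix wB
  have hTapp : ∀ i j, T i j = vB j i := by
    intro i j
    show (Pi.basisFun K (Fin n)).repr (vB j) i = vB j i
    rw [Pi.basisFun_repr]
  have hQapp : ∀ i j, Q i j = wB j i := by
    intro i j
    show (Pi.basisFun K (Fin m)).repr (wB j) i = wB j i
    rw [Pi.basisFun_repr]
  refine ⟨(unitOfInvertible Q)⁻¹, unitOfInvertible T, ?_, ?_⟩
  · -- T e_r = p
    funext i
    show ∑ j, T i j * (if (j : ℕ) = r then 1 else 0) = p i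
    rw [Finset.sum_eq_single (⟨r, hrn⟩ : Fin n)]
    · rw [hTapp, hvp, if_pos rfl, mul_one]
    · intro b _ hbr
      rw [if_neg, mul_zero]
      intro hb
      exact hbr (Fin.ext hb)
    · intro h; exact absurd (Finset.mem_univ _) h
  · -- S A T = E
    have hScoe : (((unitOfInvertible Q)⁻¹ : Matrix.GeneralLinearGroup (Fin m) K) : Matrix (Fin m) (Fin m) K)
        = (⅟Q : Matrix (Fin m) (Fin m) K) := rfl
    rw [hScoe]
    have hAT : A * T = Q * Matrix.of (fun (i : Fin m) (j : Fin n) =>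
        if (i : ℕ) = (j : ℕ) ∧ (i : ℕ) < r then (1 : K) else 0) := by
      ext i j
      rw [Matrix.mul_apply, Matrix.mul_apply]
      have hATl : ∑ l, A i l * T l j = A.mulVec (vB j) i := by
        apply Finset.sum_congr rfl
        intro l _
        rw [hTapp]
      rw [hATl]
      by_cases hjr : (j : ℕ) < r
      · rw [Finset.sum_eq_single (Fin.castLE hrm ⟨(j : ℕ), hjr⟩)]
        · rw [Matrix.of_apply, if_pos ⟨rfl, hjr⟩, mul_one, hQapp, hwB]
          simp only [hc]
          have : Fin.castLE hrn.le ⟨(j : ℕ), hjr⟩ = j := Fin.ext rfl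
          rw [this]
        · intro b _ hb
          rw [Matrix.of_apply, if_neg, mul_zero]
          rintro ⟨hb1, hb2⟩
          exact hb (Fin.ext hb1)
        · intro h; exact absurd (Finset.mem_univ _) h
      · rw [Finset.sum_eq_zero]
        · have : A.mulVec (vB j) = 0 := hvW j (by omega)
          rw [this]
          rfl
        · intro b _
          rw [Matrix.of_apply, if_neg, mul_zero]
          rintro ⟨hb1, hb2⟩
          omega
    have hTcoe : ((unitOfInvertible T : Matrix.GeneralLinearGroup (Fin n) K) : Matrix (Fin n) (Fin n) K) = T := rfl
    rw [hTcoe, Matrix.mul_assoc, hAT, ← Matrix.mul_assoc, invOf_mul_self, Matrix.one_mul]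

end AuxB

/-- If `H` has degree `d`, rank `r := rk JH`, `|K| > (d-1)r` (or `|K| ≥ (d-1)r` when every
nonzero component of `H` is homogeneous) and `JH · x = 0`, then after composing with
suitable `S ∈ GL_m(K)` and `T ∈ GL_n(K)`, the Jacobian matrix of `S·H(Tx)` evaluated at
`e_{r+1}` is the block matrix `[[I_r, 0], [0, 0]]`. -/
theorem jacobian_normal_form_at_point_of_mulVec_eq_zero {K : Type*} [Field K]
    {m n : ℕ} (d : ℕ) (H : Fin m → MvPolynomial (Fin n) K)
    (hd : (Finset.univ.sup fun i => (H i).totalDegree) = d)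
    (r : ℕ) (hr : r = jacRank H)
    (hK : (((d - 1) * r : ℕ) : Cardinal) < Cardinal.mk K ∨
      ((((d - 1) * r : ℕ) : Cardinal) ≤ Cardinal.mk K ∧
        ∀ i, ∃ e : ℕ, (H i).IsHomogeneous e))
    (hx : (jac H).mulVec (fun j => X j) = 0) :
    ∃ (S : Matrix.GeneralLinearGroup (Fin m) K) (T : Matrix.GeneralLinearGroup (Fin n) K),
      (Matrix.of fun (i : Fin m) (j : Fin n) =>
          eval (fun k : Fin n => if (k : ℕ) = r then 1 else 0)
            (jac (applyST (S : Matrix (Fin m) (Fin m) K) (T : Matrix (Fin n) (Fin n) K) H) i j)) =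
      Matrix.of fun (i : Fin m) (j : Fin n) =>
        if (i : ℕ) = (j : ℕ) ∧ (i : ℕ) < r then 1 else 0 := by
  classical
  rcases Nat.eq_zero_or_pos n with hn | hn
  · subst hn
    refine ⟨1, 1, ?_⟩
    ext i j
    exact j.elim0
  set P : Matrix (Fin m) (Fin n) (MvPolynomial (Fin n) K) := jac H with hP
  set M : Matrix (Fin m) (Fin n) (FractionRing (MvPolynomial (Fin n) K)) := P.map (algebraMap (MvPolynomial (Fin n) K) (FractionRing (MvPolynomial (Fin n) K))) with hM
  have hrM : M.rank = r := hr.symm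
  have halginj : Function.Injective (algebraMap (MvPolynomial (Fin n) K) (FractionRing (MvPolynomial (Fin n) K))) := IsFractionRing.injective (MvPolynomial (Fin n) K) (FractionRing (MvPolynomial (Fin n) K))
  have hrn : r < n := by
    have hv : (fun j : Fin n => algebraMap (MvPolynomial (Fin n) K) (FractionRing (MvPolynomial (Fin n) K)) (X j)) ≠ 0 := by
      intro hz
      have h1 := congrFun hz ⟨0, hn⟩
      rw [Pi.zero_apply, ← map_zero (algebraMap (MvPolynomial (Fin n) K)
        (FractionRing (MvPolynomial (Fin n) K)))] at h1
      exact MvPolynomial.X_ne_zero _ (halginj h1)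
    have hMv : M.mulVec (fun j => algebraMap (MvPolynomial (Fin n) K) (FractionRing (MvPolynomial (Fin n) K)) (X j)) = 0 := by
      funext i
      have h1 : (M.mulVec fun j => algebraMap (MvPolynomial (Fin n) K) (FractionRing (MvPolynomial (Fin n) K)) (X j)) i
          = algebraMap (MvPolynomial (Fin n) K) (FractionRing (MvPolynomial (Fin n) K)) ((P.mulVec fun j => X j) i) := by
        rw [hM]
        simp [Matrix.mulVec, dotProduct, Matrix.map_apply, map_sum]
      rw [h1, hx]
      simp
    have := auxJ_rank_lt_of_mulVec M hv hMv
    omega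
  have hrm : r ≤ m := by
    have := Matrix.rank_le_card_height M
    simp only [Fintype.card_fin] at this
    omega
  obtain ⟨s, t, hst⟩ := auxJ_exists_det_ne_zero M (le_of_eq hrM.symm)
  set f : MvPolynomial (Fin n) K := (P.submatrix s t).det with hf
  have hMsub : M.submatrix s t = (P.submatrix s t).map (algebraMap (MvPolynomial (Fin n) K) (FractionRing (MvPolynomial (Fin n) K))) := rfl
  have hmapf : algebraMap (MvPolynomial (Fin n) K) (FractionRing (MvPolynomial (Fin n) K)) f = (M.submatrix s t).det := by
    rw [hMsub, hf, RingHom.map_det, RingHom.mapMatrix_apply]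
  have hf0 : f ≠ 0 := by
    intro h0
    apply hst
    rw [← hmapf, h0, map_zero]
  -- constant coefficients of the Jacobian entries vanish
  have hcc : ∀ (i : Fin m) (j0 : Fin n), constantCoeff (P i j0) = 0 := by
    intro i j0
    have hxi : ∑ j, P i j * X j = 0 := congrFun hx i
    have h2 := congrArg (MvPolynomial.coeff (Finsupp.single j0 1)) hxi
    rw [MvPolynomial.coeff_sum, MvPolynomial.coeff_zero] at h2
    rw [Finset.sum_eq_single j0] at h2
    · rw [coeff_mul_X', if_pos (by simp [Finsupp.support_single_ne_zero])] at h2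
      rw [constantCoeff_eq]
      have h3 : Finsupp.single j0 1 - Finsupp.single j0 1 = 0 := by simp
      rw [h3] at h2
      exact h2
    · intro b _ hbj
      rw [coeff_mul_X', if_neg]
      simp only [Finsupp.mem_support_iff, Finsupp.single_apply]
      rw [if_neg (fun h => hbj h.symm)]
      simp
    · intro h; exact absurd (Finset.mem_univ _) h
  -- degree bound of the minor
  have hdH : ∀ i, (H i).totalDegree ≤ d := by
    intro i
    rw [← hd]
    exact Finset.le_sup (f := fun i => (H i).totalDegree) (Finset.mem_univ i)
  have hdP : ∀ i j, (P i j).totalDegree ≤ d - 1 := by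
    intro i j
    refine le_trans (auxP_totalDegree_pderiv_le (H i) j) ?_
    have := hdH i; omega
  have hdeg : f.totalDegree ≤ (d - 1) * r := by
    rw [hf, Matrix.det_apply]
    refine le_trans (totalDegree_finset_sum _ _) ?_
    apply Finset.sup_le
    intro σ _
    refine le_trans (totalDegree_smul_le _ _) ?_
    refine le_trans (totalDegree_finset_prod _ _) ?_
    refine le_trans (Finset.sum_le_sum (fun i2 _ => hdP (s (σ i2)) (t i2))) ?_
    rw [Finset.sum_const, Finset.card_univ, Fintype.card_fin, smul_eq_mul, mul_comm]
  -- existence of a nonvanishing point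
  obtain ⟨p1, hp1⟩ : ∃ p1 : Fin n → K, eval p1 f ≠ 0 := by
    rcases hK with hKl | ⟨hKl, hhom⟩
    · exact auxP_exists_eval_ne_zero_strict hf0
        (lt_of_le_of_lt (Nat.cast_le.mpr hdeg) hKl)
    · -- homogeneous case
      set e : Fin m → ℕ := fun i => (H i).totalDegree with he
      have hHom : ∀ i, (H i).IsHomogeneous (e i) := by
        intro i
        by_cases h0 : H i = 0
        · rw [h0]; exact isHomogeneous_zero _ _ _
        · obtain ⟨e', he'⟩ := hhom i
          have : e i = e' := by rw [he]; exact he'.totalDegree h0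
          rw [this]; exact he'
      set D : ℕ := ∑ i2 : Fin r, (e (s i2) - 1) with hD
      have hfh : f.IsHomogeneous D := by
        rw [hf, Matrix.det_apply']
        apply IsHomogeneous.sum
        intro σ _
        have hprod : (∏ i2, (P.submatrix s t) (σ i2) i2).IsHomogeneous
            (∑ i2, (e (s (σ i2)) - 1)) := by
          apply IsHomogeneous.prod
          intro i2 _
          exact auxP_isHomogeneous_pderiv (hHom (s (σ i2))) (t i2)
        have hsum : ∑ i2, (e (s (σ i2)) - 1) = D := by
          rw [hD]
          exact Equiv.sum_comp σ (fun i2 => e (s i2) - 1)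
        rw [hsum] at hprod
        rw [show ((Equiv.Perm.sign σ : ℤ) : MvPolynomial (Fin n) K) = C ((Equiv.Perm.sign σ : ℤ) : K) from
          (map_intCast (C : K →+* MvPolynomial (Fin n) K) _).symm]
        exact hprod.C_mul _
      have hDle : D ≤ (d - 1) * r := by
        rw [hD]
        refine le_trans (Finset.sum_le_sum (g := fun _ : Fin r => d - 1) (fun i2 _ => ?_)) ?_
        · exact Nat.sub_le_sub_right (hdH (s i2)) 1
        · rw [Finset.sum_const, Finset.card_univ, Fintype.card_fin, smul_eq_mul, mul_comm]
      by_contra hall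
      push_neg at hall
      exact hf0 (hfh.eq_zero_of_forall_eval_eq_zero_of_le_card hall
        (le_trans (Nat.cast_le.mpr hDle) hKl))
  obtain ⟨p, hp0, hpf⟩ : ∃ p : Fin n → K, p ≠ 0 ∧ eval p f ≠ 0 := by
    rcases Nat.eq_zero_or_pos r with h0 | hrpos
    · subst h0
      refine ⟨fun _ => 1, ?_, ?_⟩
      · intro hz
        have := congrFun hz ⟨0, hn⟩
        simp at this
      · rw [hf, Matrix.det_isEmpty]
        simp
    · refine ⟨p1, ?_, hp1⟩
      intro h0
      apply hp1
      rw [h0]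
      have : eval (0 : Fin n → K) f = constantCoeff f := by rw [eval_zero]
      rw [this, hf, RingHom.map_det, RingHom.mapMatrix_apply]
      have hz : (P.submatrix s t).map (constantCoeff : MvPolynomial (Fin n) K →+* K) = 0 := by
        ext i j
        exact hcc (s i) (t j)
      rw [hz]
      haveI : Nonempty (Fin r) := ⟨⟨0, hrpos⟩⟩
      exact Matrix.det_zero
  -- the evaluated Jacobian and its rank
  set A : Matrix (Fin m) (Fin n) K := P.map (eval p) with hA
  have hPA : A.submatrix s t = (P.submatrix s t).map (eval p) := rfl
  have hdetA : (A.submatrix s t).det ≠ 0 := by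
    rw [hPA, ← RingHom.mapMatrix_apply, ← RingHom.map_det]
    exact hpf
  have hArank_ge : r ≤ A.rank := auxJ_le_rank_of_det_ne_zero A s t hdetA
  have hArank_le : A.rank ≤ r := by
    by_contra hcon
    push_neg at hcon
    obtain ⟨s', t', h'⟩ := auxJ_exists_det_ne_zero A (show r + 1 ≤ A.rank by omega)
    have hM0 : (M.submatrix s' t').det = 0 := by
      by_contra hMne
      have := auxJ_le_rank_of_det_ne_zero M s' t' hMne
      omega
    have hP0 : (P.submatrix s' t').det = 0 := by
      apply halginj
      rw [map_zero, RingHom.map_det, RingHom.mapMatrix_apply]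
      exact hM0
    apply h'
    rw [show A.submatrix s' t' = (P.submatrix s' t').map (eval p) from rfl,
      ← RingHom.mapMatrix_apply, ← RingHom.map_det, hP0, map_zero]
  have hArank : A.rank = r := le_antisymm hArank_le hArank_ge
  have hAp : A.mulVec p = 0 := by
    funext i
    have h1 : (A.mulVec p) i = eval p ((P.mulVec fun j => X j) i) := by
      rw [hA]
      simp [Matrix.mulVec, dotProduct, Matrix.map_apply, map_sum]
    rw [h1, hx]
    simp
  obtain ⟨S, T, hT, hST⟩ := auxB_normal_form A hArank hrn hrm hp0 hAp
  refine ⟨S, T, ?_⟩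
  have hjac := auxC_jac_applyST (S : Matrix (Fin m) (Fin m) K)
    (T : Matrix (Fin n) (Fin n) K) H (fun k => if (k : ℕ) = r then (1 : K) else 0)
  rw [hjac, hT]
  exact hST
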